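/- Let W, W′, V be real vector spaces carrying linear ℝ⁺-representations, with an ℝ⁺-equivariant bilinear product W × W′ → V (i.e. F_λ F′_λ = (FF′)_λ). If F ∈ W has almost homogeneous degree k and order l, and F′ ∈ W′ has almost homogeneous degree k′ and order l′, then FF′ ∈ V has almost homogeneous degree k + k′ and order l + l′. -/

import Mathlib

def AlmostHomog {W : Type*} [AddCommGroup W] [Module ℝ W]
    (act : ℝ → W →ₗ[ℝ] W) (k : ℝ) : ℕ → W → Prop
  | l, F => ∃ G : Fin l → W,
      (∀ j : Fin l, AlmostHomog act k (l - ((j : ℕ) + 1)) (G j)) ∧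
      ∀ lam : ℝ, 0 < lam →
        act lam F = lam ^ k • F +
          lam ^ k • ∑ j : Fin l, (Real.log lam) ^ ((j : ℕ) + 1) • G j
  termination_by l => l
  decreasing_by have := j.isLt; omega

theorem almostHomog_iff {W : Type*} [AddCommGroup W] [Module ℝ W]
    (act : ℝ → W →ₗ[ℝ] W) (k : ℝ) (l : ℕ) (F : W) :
    AlmostHomog act k l F ↔ ∃ G : Fin l → W,
      (∀ j : Fin l, AlmostHomog act k (l - ((j : ℕ) + 1)) (G j)) ∧
      ∀ lam : ℝ, 0 < lam →
        act lam F = lam ^ k • F +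
          lam ^ k • ∑ j : Fin l, (Real.log lam) ^ ((j : ℕ) + 1) • G j := by
  rw [AlmostHomog]

theorem almostHomog_zero {W : Type*} [AddCommGroup W] [Module ℝ W]
    (act : ℝ → W →ₗ[ℝ] W) (k : ℝ) : ∀ l : ℕ, AlmostHomog act k l (0 : W) := by
  intro l
  induction l using Nat.strong_induction_on with
  | _ l ih =>
    rw [almostHomog_iff]
    refine ⟨fun _ => 0, fun j => ih _ (by have := j.isLt; omega), fun lam _ => by simp⟩

theorem almostHomog_add {W : Type*} [AddCommGroup W] [Module ℝ W]
    (act : ℝ → W →ₗ[ℝ] W) (k : ℝ) : ∀ l : ℕ, ∀ F₁ F₂ : W,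
    AlmostHomog act k l F₁ → AlmostHomog act k l F₂ → AlmostHomog act k l (F₁ + F₂) := by
  intro l
  induction l using Nat.strong_induction_on with
  | _ l ih =>
    intro F₁ F₂ h₁ h₂
    rw [almostHomog_iff] at h₁ h₂ ⊢
    obtain ⟨G₁, hG₁, e₁⟩ := h₁
    obtain ⟨G₂, hG₂, e₂⟩ := h₂
    refine ⟨fun j => G₁ j + G₂ j,
      fun j => ih _ (by have := j.isLt; omega) _ _ (hG₁ j) (hG₂ j), fun lam hlam => ?_⟩
    rw [map_add, e₁ lam hlam, e₂ lam hlam]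
    simp only [smul_add, Finset.sum_add_distrib]
    abel

theorem almostHomog_sum {W : Type*} [AddCommGroup W] [Module ℝ W]
    (act : ℝ → W →ₗ[ℝ] W) (k : ℝ) (l : ℕ) {ι : Type*} (s : Finset ι) (f : ι → W)
    (h : ∀ i ∈ s, AlmostHomog act k l (f i)) :
    AlmostHomog act k l (∑ i ∈ s, f i) := by
  classical
  induction s using Finset.induction_on with
  | empty => simpa using almostHomog_zero act k l
  | insert _ _ hx ih =>
    rw [Finset.sum_insert hx]
    exact almostHomog_add act k l _ _ (h _ (Finset.mem_insert_self _ _))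
      (ih fun i hi => h i (Finset.mem_insert_of_mem hi))

theorem stmt7_key {W W' V : Type*} [AddCommGroup W] [Module ℝ W]
    [AddCommGroup W'] [Module ℝ W'] [AddCommGroup V] [Module ℝ V]
    (actW : ℝ → W →ₗ[ℝ] W) (actW' : ℝ → W' →ₗ[ℝ] W') (actV : ℝ → V →ₗ[ℝ] V)
    (B : W →ₗ[ℝ] W' →ₗ[ℝ] V)
    (hequiv : ∀ lam : ℝ, 0 < lam → ∀ (x : W) (y : W'),
      actV lam (B x y) = B (actW lam x) (actW' lam y))
    (k k' : ℝ) : ∀ n : ℕ, ∀ l l' : ℕ, ∀ (F : W) (F' : W'), l + l' = n →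
    AlmostHomog actW k l F → AlmostHomog actW' k' l' F' →
    AlmostHomog actV (k + k') (l + l') (B F F') := by
  classical
  intro n
  induction n using Nat.strong_induction_on with
  | _ n ih =>
    intro l l' F F' hn hF hF'
    rw [almostHomog_iff] at hF hF'
    obtain ⟨G, hG, eG⟩ := hF
    obtain ⟨G', hG', eG'⟩ := hF'
    set Gt : ℕ → W := fun j => Nat.casesOn j F (fun i => if h : i < l then G ⟨i, h⟩ else 0)
      with hGt
    set Gt' : ℕ → W' := fun j => Nat.casesOn j F' (fun i => if h : i < l' then G' ⟨i, h⟩ else 0)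
      with hGt'
    have hGtsucc : ∀ j : Fin l, Gt ((j : ℕ) + 1) = G j := by
      intro j
      have h0 : Gt ((j : ℕ) + 1) = if h : (j : ℕ) < l then G ⟨(j : ℕ), h⟩ else 0 := rfl
      rw [h0, dif_pos j.isLt]
    have hGtsucc' : ∀ j : Fin l', Gt' ((j : ℕ) + 1) = G' j := by
      intro j
      have h0 : Gt' ((j : ℕ) + 1) = if h : (j : ℕ) < l' then G' ⟨(j : ℕ), h⟩ else 0 := rfl
      rw [h0, dif_pos j.isLt]
    have hAW : ∀ j : ℕ, j ≤ l → AlmostHomog actW k (l - j) (Gt j) := by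
      intro j hj
      match j with
      | 0 => simpa using (show AlmostHomog actW k l (Gt 0) from (almostHomog_iff actW k l F).2 ⟨G, hG, eG⟩)
      | Nat.succ i =>
        have hi : i < l := by omega
        simpa using hGtsucc ⟨i, hi⟩ ▸ hG ⟨i, hi⟩
    have hAW' : ∀ j : ℕ, j ≤ l' → AlmostHomog actW' k' (l' - j) (Gt' j) := by
      intro j hj
      match j with
      | 0 => simpa using (show AlmostHomog actW' k' l' (Gt' 0) from (almostHomog_iff actW' k' l' F').2 ⟨G', hG', eG'⟩)
      | Nat.succ i =>
        have hi : i < l' := by omega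
        simpa using hGtsucc' ⟨i, hi⟩ ▸ hG' ⟨i, hi⟩
    have eS : ∀ lam : ℝ, 0 < lam →
        actW lam F = lam ^ k • ∑ j ∈ Finset.range (l + 1), (Real.log lam) ^ j • Gt j := by
      intro lam hlam
      have hsum : ∑ j ∈ Finset.range (l + 1), (Real.log lam) ^ j • Gt j
          = F + ∑ j : Fin l, (Real.log lam) ^ ((j : ℕ) + 1) • G j := by
        rw [Finset.sum_range_succ']
        simp only [pow_zero, one_smul]
        rw [add_comm]
        congr 1
        rw [← Fin.sum_univ_eq_sum_range
          (fun j => (Real.log lam) ^ (j + 1) • Gt (j + 1)) l]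
        exact Finset.sum_congr rfl fun j _ => by rw [hGtsucc j]
      rw [eG lam hlam, hsum, smul_add]
    have eS' : ∀ lam : ℝ, 0 < lam →
        actW' lam F' = lam ^ k' • ∑ j ∈ Finset.range (l' + 1), (Real.log lam) ^ j • Gt' j := by
      intro lam hlam
      have hsum : ∑ j ∈ Finset.range (l' + 1), (Real.log lam) ^ j • Gt' j
          = F' + ∑ j : Fin l', (Real.log lam) ^ ((j : ℕ) + 1) • G' j := by
        rw [Finset.sum_range_succ']
        simp only [pow_zero, one_smul]
        rw [add_comm]
        congr 1
        rw [← Fin.sum_univ_eq_sum_range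
          (fun j => (Real.log lam) ^ (j + 1) • Gt' (j + 1)) l']
        exact Finset.sum_congr rfl fun j _ => by rw [hGtsucc' j]
      rw [eG' lam hlam, hsum, smul_add]
    set s : Finset (ℕ × ℕ) := Finset.range (l + 1) ×ˢ Finset.range (l' + 1) with hs
    set H : ℕ → V := fun m =>
      ∑ p ∈ s.filter (fun p => p.1 + p.2 = m), B (Gt p.1) (Gt' p.2) with hH
    have hH0 : H 0 = B F F' := by
      have hfil : s.filter (fun p => p.1 + p.2 = 0) = {((0 : ℕ), (0 : ℕ))} := by
        ext ⟨a, b⟩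
        simp only [Finset.mem_filter, hs, Finset.mem_product, Finset.mem_range,
          Finset.mem_singleton, Prod.mk.injEq]
        omega
      show (∑ p ∈ s.filter (fun p => p.1 + p.2 = 0), B (Gt p.1) (Gt' p.2)) = B F F'
      rw [hfil, Finset.sum_singleton]
      rfl
    have hHm : ∀ m : ℕ, m + 1 ≤ l + l' →
        AlmostHomog actV (k + k') (l + l' - (m + 1)) (H (m + 1)) := by
      intro m hm
      refine almostHomog_sum _ _ _ _ _ fun p hp => ?_
      rw [Finset.mem_filter, hs, Finset.mem_product, Finset.mem_range, Finset.mem_range] at hp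
      obtain ⟨⟨h1, h2⟩, h3⟩ := hp
      have h1' : p.1 ≤ l := by omega
      have h2' : p.2 ≤ l' := by omega
      have := ih ((l - p.1) + (l' - p.2)) (by omega) (l - p.1) (l' - p.2) (Gt p.1) (Gt' p.2)
        rfl (hAW _ h1') (hAW' _ h2')
      have heq : (l - p.1) + (l' - p.2) = l + l' - (m + 1) := by omega
      rwa [heq] at this
    have key : ∀ lam : ℝ, 0 < lam → actV lam (B F F') =
        lam ^ (k + k') • ∑ m ∈ Finset.range (l + l' + 1), (Real.log lam) ^ m • H m := by
      intro lam hlam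
      have h1 : actV lam (B F F') = lam ^ (k + k') •
          ∑ p ∈ s, (Real.log lam) ^ (p.1 + p.2) • B (Gt p.1) (Gt' p.2) := by
        rw [hequiv lam hlam, eS lam hlam, eS' lam hlam, map_smul, LinearMap.map_smul₂,
          smul_smul, mul_comm, ← Real.rpow_add hlam]
        congr 1
        rw [hs, Finset.sum_product]
        simp only [map_sum, LinearMap.sum_apply, map_smul, LinearMap.smul_apply,
          Finset.smul_sum, smul_smul, ← pow_add]
        rw [Finset.sum_comm]
        exact Finset.sum_congr rfl fun a _ => Finset.sum_congr rfl fun b _ => by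
          rw [Nat.add_comm]
      have h2 : ∑ p ∈ s, (Real.log lam) ^ (p.1 + p.2) • B (Gt p.1) (Gt' p.2)
          = ∑ m ∈ Finset.range (l + l' + 1), (Real.log lam) ^ m • H m := by
        rw [← Finset.sum_fiberwise_of_maps_to (g := fun p : ℕ × ℕ => p.1 + p.2)
          (t := Finset.range (l + l' + 1))
          (fun p hp => by
            rw [hs, Finset.mem_product, Finset.mem_range, Finset.mem_range] at hp
            simp only [Finset.mem_range]; omega)]
        refine Finset.sum_congr rfl fun m _ => ?_
        simp only [hH]
        rw [Finset.smul_sum]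
        refine Finset.sum_congr rfl fun p hp => ?_
        rw [Finset.mem_filter] at hp
        rw [hp.2]
      rw [h1, h2]
    rw [almostHomog_iff]
    refine ⟨fun m => H ((m : ℕ) + 1), fun m => hHm _ (by have := m.isLt; omega),
      fun lam hlam => ?_⟩
    rw [key lam hlam, Finset.sum_range_succ']
    simp only [pow_zero, one_smul, hH0]
    rw [smul_add, add_comm]
    congr 1
    congr 1
    rw [← Fin.sum_univ_eq_sum_range (fun m => (Real.log lam) ^ (m + 1) • H (m + 1)) (l + l')]

theorem stmt7 {W W' V : Type*} [AddCommGroup W] [Module ℝ W]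
    [AddCommGroup W'] [Module ℝ W'] [AddCommGroup V] [Module ℝ V]
    (actW : ℝ → W →ₗ[ℝ] W) (actW' : ℝ → W' →ₗ[ℝ] W') (actV : ℝ → V →ₗ[ℝ] V)
    (B : W →ₗ[ℝ] W' →ₗ[ℝ] V)
    (hequiv : ∀ lam : ℝ, 0 < lam → ∀ (x : W) (y : W'),
      actV lam (B x y) = B (actW lam x) (actW' lam y))
    (k k' : ℝ) (l l' : ℕ) (F : W) (F' : W')
    (hF : AlmostHomog actW k l F) (hF' : AlmostHomog actW' k' l' F') :
    AlmostHomog actV (k + k') (l + l') (B F F') :=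
  stmt7_key actW actW' actV B hequiv k k' (l + l') l l' F F' rfl hF hF'
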